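/- For ρ > 0 set δ_ρ := (ρe − 1)/(2√(e² + 1)). Then: (i) for every ρ ∈ [0.95, (1 + √(1 + e²))/e], the supremum of |w/(w−1)| over all w ∈ ℂ with dist(w, Σ₁) ≥ δ_ρ and Re(w) ≤ δ_ρ is at most 1; and (ii) for every ρ ∈ ((1 + √(1 + e²))/e, 2], the same supremum is at most 1.39. -/

import Mathlib

/-- The Szegő region `Σ₁ = {z ∈ ℂ : |z e^{1-z}| ≤ 1} ∩ D₁`. -/
noncomputable def Szego : Set ℂ :=
  {z : ℂ | ‖z * Complex.exp (1 - z)‖ ≤ 1} ∩ {z : ℂ | ‖z‖ ≤ 1}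

/-- `δ_ρ = (ρ e - 1)/(2 √(e² + 1))`. -/
noncomputable def deltaRho (ρ : ℝ) : ℝ :=
  (ρ * Real.exp 1 - 1) / (2 * Real.sqrt (Real.exp 1 ^ 2 + 1))


lemma real_mem_Szego {x : ℝ} (hx0 : 0 ≤ x) (hx1 : x ≤ 1) : (x : ℂ) ∈ Szego := by
  refine ⟨?_, ?_⟩
  · show ‖_‖ ≤ 1
    rw [norm_mul, Complex.norm_exp]
    have h2 : ((1 : ℂ) - (x:ℂ)).re = 1 - x := by simp
    rw [h2, Complex.norm_of_nonneg hx0]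
    have h := Real.add_one_le_exp (x - 1)
    have h3 : x * Real.exp (1 - x) ≤ Real.exp (x - 1) * Real.exp (1 - x) := by
      apply mul_le_mul_of_nonneg_right _ (Real.exp_pos _).le
      linarith
    calc x * Real.exp (1 - x) ≤ Real.exp (x-1) * Real.exp (1-x) := h3
      _ = Real.exp 0 := by rw [← Real.exp_add]; ring_nf
      _ = 1 := Real.exp_zero
  · show ‖_‖ ≤ 1
    rw [Complex.norm_of_nonneg hx0]; exact hx1

lemma one_mem_Szego : (1 : ℂ) ∈ Szego := by
  exact_mod_cast real_mem_Szego (by norm_num : (0:ℝ) ≤ 1) le_rfl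

lemma abs_le_of_sq_le {a b : ℝ} (ha : 0 ≤ a) (hb : 0 ≤ b) (h : a ^ 2 ≤ b ^ 2) : a ≤ b := by
  nlinarith


/-- Bounds on the supremum of `|w/(w-1)|` over `w` with `dist(w, Σ₁) ≥ δ_ρ` and
`Re(w) ≤ δ_ρ`: at most `1` for `ρ ∈ [0.95, (1+√(1+e²))/e]`, and at most `1.39`
for `ρ ∈ ((1+√(1+e²))/e, 2]`. -/
theorem sup_abs_w_div_w_sub_one_bounds :
    (∀ ρ : ℝ, 0.95 ≤ ρ → ρ ≤ (1 + Real.sqrt (1 + Real.exp 1 ^ 2)) / Real.exp 1 →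
      ∀ w : ℂ, deltaRho ρ ≤ Metric.infDist w Szego → w.re ≤ deltaRho ρ →
        ‖w / (w - 1)‖ ≤ 1) ∧
    (∀ ρ : ℝ, (1 + Real.sqrt (1 + Real.exp 1 ^ 2)) / Real.exp 1 < ρ → ρ ≤ 2 →
      ∀ w : ℂ, deltaRho ρ ≤ Metric.infDist w Szego → w.re ≤ deltaRho ρ →
        ‖w / (w - 1)‖ ≤ 1.39) := by
  have he : (0:ℝ) < Real.exp 1 := Real.exp_pos 1
  have hcomm : Real.sqrt (1 + Real.exp 1 ^ 2) = Real.sqrt (Real.exp 1 ^ 2 + 1) := by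
    rw [add_comm]
  have hs : (0:ℝ) < Real.sqrt (Real.exp 1 ^ 2 + 1) := Real.sqrt_pos.mpr (by positivity)
  have hes : Real.exp 1 ≤ Real.sqrt (Real.exp 1 ^ 2 + 1) := by
    nlinarith [Real.sq_sqrt (show (0:ℝ) ≤ Real.exp 1 ^ 2 + 1 by positivity)]
  constructor
  · intro ρ _ hρ2 w _ hre
    have hδ : deltaRho ρ ≤ 1/2 := by
      have h1 : ρ * Real.exp 1 ≤ 1 + Real.sqrt (Real.exp 1 ^ 2 + 1) := by
        rw [hcomm] at hρ2
        calc ρ * Real.exp 1 ≤ ((1 + Real.sqrt (Real.exp 1 ^ 2 + 1)) / Real.exp 1) * Real.exp 1 :=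
              mul_le_mul_of_nonneg_right hρ2 he.le
          _ = 1 + Real.sqrt (Real.exp 1 ^ 2 + 1) := by field_simp
      unfold deltaRho
      rw [div_le_iff₀ (by positivity)]
      linarith
    have hre' : w.re ≤ 1/2 := le_trans hre hδ
    rw [norm_div]
    apply div_le_one_of_le₀ _ (norm_nonneg _)
    have h1 : ‖w‖^2 ≤ ‖w-1‖^2 := by
      rw [Complex.sq_norm, Complex.sq_norm, Complex.normSq_apply, Complex.normSq_apply]
      simp only [Complex.sub_re, Complex.sub_im, Complex.one_re, Complex.one_im, sub_zero]
      nlinarith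
    exact abs_le_of_sq_le (norm_nonneg _) (norm_nonneg _) h1
  · intro ρ hρ1 hρ2 w hd hre
    set δ := deltaRho ρ with hδdef
    have hδhalf : 1/2 < δ := by
      have h1 : 1 + Real.sqrt (Real.exp 1 ^ 2 + 1) < ρ * Real.exp 1 := by
        rw [hcomm, div_lt_iff₀ he] at hρ1
        exact hρ1
      rw [hδdef]; unfold deltaRho
      rw [lt_div_iff₀ (by positivity)]
      linarith
    have helt : Real.exp 1 < 2.7182818286 := Real.exp_one_lt_d9
    have hδup : δ ≤ 5/6 := by
      rw [hδdef]; unfold deltaRho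
      rw [div_le_iff₀ (by positivity)]
      nlinarith [mul_le_mul_of_nonneg_right hρ2 he.le]
    have hb : δ ≤ ‖w - 1‖ := by
      calc δ ≤ Metric.infDist w Szego := hd
        _ ≤ dist w 1 := Metric.infDist_le_dist_of_mem one_mem_Szego
        _ = ‖w - 1‖ := Complex.dist_eq w 1
    have hbpos : (0:ℝ) < ‖w - 1‖ := lt_of_lt_of_le (by linarith) hb
    rw [norm_div, div_le_iff₀ hbpos]
    by_cases hx : w.re ≤ 1/2
    · have h1 : ‖w‖^2 ≤ ‖w-1‖^2 := by
        rw [Complex.sq_norm, Complex.sq_norm, Complex.normSq_apply, Complex.normSq_apply]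
        simp only [Complex.sub_re, Complex.sub_im, Complex.one_re, Complex.one_im, sub_zero]
        nlinarith
      have h2 := abs_le_of_sq_le (norm_nonneg _) (norm_nonneg _) h1
      nlinarith [norm_nonneg (w-1)]
    · push_neg at hx
      have hx0 : (0:ℝ) ≤ w.re := by linarith
      have hx1 : w.re ≤ 1 := by linarith
      have hy : δ ≤ |w.im| := by
        have h3 : δ ≤ dist w (w.re : ℂ) :=
          le_trans hd (Metric.infDist_le_dist_of_mem (real_mem_Szego hx0 hx1))
        rw [Complex.dist_eq] at h3
        have h4 : ‖w - (w.re : ℂ)‖ = |w.im| := by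
          rw [Complex.norm_def, Complex.normSq_apply]
          simp only [Complex.sub_re, Complex.sub_im, Complex.ofReal_re, Complex.ofReal_im,
            sub_self, sub_zero]
          rw [show (0:ℝ)*0 + w.im*w.im = w.im^2 by ring, Real.sqrt_sq_eq_abs]
        rwa [h4] at h3
      have hy2 : δ^2 ≤ w.im^2 := by
        nlinarith [abs_nonneg w.im, sq_abs w.im]
      have h1 : ‖w‖^2 ≤ (1.39 * ‖w-1‖)^2 := by
        rw [mul_pow, Complex.sq_norm, Complex.sq_norm, Complex.normSq_apply, Complex.normSq_apply]
        simp only [Complex.sub_re, Complex.sub_im, Complex.one_re, Complex.one_im, sub_zero]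
        nlinarith [hy2, sq_nonneg (w.re - δ), sq_nonneg (1 - δ), mul_nonneg (sub_nonneg.mpr hre) (sub_nonneg.mpr hδhalf.le), mul_nonneg (sub_nonneg.mpr hδup) (sub_nonneg.mpr hδhalf.le)]
      have h2 := abs_le_of_sq_le (norm_nonneg _) (by positivity) h1
      linarith
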